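/- arXiv:1710.02956 — 2 statements merged into one kernel-verified Lean document; each statement's English description precedes it below -/
import Mathlib

section
/- Let S be a set of positive integers and let σ be a positive integer with σ ∉ S. Then for all n ∈ ℕ, as rational numbers, B_{n, S ∪ {σ}} = ∑_{i=0}^{⌊n/σ⌋} n!/(i! · (n−σi)! · (σ!)^i) · B_{n−σi, S}. -/
open Finset

variable {α β : Type*} [DecidableEq α] [DecidableEq β]

/-- Generalized Bell number `B_{n,S}`: the number of set partitions of `{1,…,n}`
all of whose block sizes lie in `S`. -/
noncomputable def genB (S : Set ℕ) (n : ℕ) : ℕ :=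
  Nat.card {P : Finpartition (Finset.univ : Finset (Fin n)) // ∀ p ∈ P.parts, p.card ∈ S}


variable {α β : Type*} [DecidableEq α] [DecidableEq β]

/-- Map a finpartition of a finset along an embedding. -/
def Finpartition.mapEmb (f : α ↪ β) {s : Finset α} (P : Finpartition s) :
    Finpartition (s.map f) where
  parts := P.parts.image (Finset.map f)
  supIndep := by
    rw [Finset.supIndep_iff_pairwiseDisjoint]
    rintro _ hp _ hq hne
    simp only [coe_image, Set.mem_image, mem_coe] at hp hq
    obtain ⟨p, hp, rfl⟩ := hp
    obtain ⟨q, hq, rfl⟩ := hq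
    have hpq : p ≠ q := fun h => hne (by rw [h])
    have := P.disjoint hp hq hpq
    simp only [Function.onFun, id] at this ⊢
    exact (Finset.disjoint_map f).2 this
  sup_parts := by
    ext x
    simp only [Finset.mem_sup, mem_image, id, Finset.mem_map]
    constructor
    · rintro ⟨_, ⟨p, hp, rfl⟩, hx⟩
      simp only [Finset.mem_map] at hx
      obtain ⟨a, ha, rfl⟩ := hx
      exact ⟨a, by rw [← P.sup_parts]; exact Finset.mem_sup.2 ⟨p, hp, ha⟩, rfl⟩
    · rintro ⟨a, ha, rfl⟩
      rw [← P.sup_parts] at ha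
      obtain ⟨p, hp, hap⟩ := Finset.mem_sup.1 ha
      exact ⟨p.map f, ⟨p, hp, rfl⟩, Finset.mem_map_of_mem f hap⟩
  bot_notMem := by
    simp only [Finset.bot_eq_empty, mem_image]
    rintro ⟨p, hp, hpe⟩
    exact P.bot_notMem (by rwa [Finset.map_eq_empty.1 hpe] at hp)

lemma Finpartition.parts_mapEmb (f : α ↪ β) {s : Finset α} (P : Finpartition s) :
    (P.mapEmb f).parts = P.parts.image (Finset.map f) := rfl

/-- Pull back a finpartition of a finset contained in the range of an embedding. -/
noncomputable def Finpartition.preimageEmb (f : α ↪ β) {t : Finset β} (Q : Finpartition t)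
    (ht : ∀ x ∈ t, ∃ a, f a = x) :
    Finpartition (t.preimage f f.injective.injOn) where
  parts := Q.parts.image (fun p => p.preimage f f.injective.injOn)
  supIndep := by
    rw [Finset.supIndep_iff_pairwiseDisjoint]
    rintro _ hp _ hq hne
    simp only [coe_image, Set.mem_image, mem_coe] at hp hq
    obtain ⟨p, hp, rfl⟩ := hp
    obtain ⟨q, hq, rfl⟩ := hq
    have hpq : p ≠ q := fun h => hne (by rw [h])
    have := Q.disjoint hp hq hpq
    simp only [Function.onFun, id] at this ⊢
    rw [Finset.disjoint_left] at this ⊢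
    intro a ha hb
    rw [Finset.mem_preimage] at ha hb
    exact this ha hb
  sup_parts := by
    ext a
    simp only [Finset.mem_sup, mem_image, id, Finset.mem_preimage]
    constructor
    · rintro ⟨_, ⟨p, hp, rfl⟩, ha⟩
      rw [Finset.mem_preimage] at ha
      rw [← Q.sup_parts]
      exact Finset.mem_sup.2 ⟨p, hp, ha⟩
    · intro ha
      rw [← Q.sup_parts] at ha
      obtain ⟨p, hp, hap⟩ := Finset.mem_sup.1 ha
      exact ⟨p.preimage f f.injective.injOn, ⟨p, hp, rfl⟩, Finset.mem_preimage.2 hap⟩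
  bot_notMem := by
    simp only [Finset.bot_eq_empty, mem_image]
    rintro ⟨p, hp, hpe⟩
    have hne : p.Nonempty := Q.nonempty_of_mem_parts hp
    obtain ⟨x, hx⟩ := hne
    obtain ⟨a, rfl⟩ := ht x (Q.le hp hx)
    have : a ∈ p.preimage f f.injective.injOn := Finset.mem_preimage.2 hx
    simp [hpe] at this


section
variable {n : ℕ} (S : Set ℕ) (s : Finset (Fin n))

lemma map_univ_orderEmbOfFin : (Finset.univ : Finset (Fin s.card)).map
    (s.orderEmbOfFin rfl).toEmbedding = s := by
  apply Finset.eq_of_subset_of_card_le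
  · intro x hx
    simp only [Finset.mem_map] at hx
    obtain ⟨i, _, rfl⟩ := hx
    exact Finset.orderEmbOfFin_mem s rfl i
  · rw [Finset.card_map, Finset.card_univ, Fintype.card_fin]

lemma card_parts_transport :
    Nat.card {Q : Finpartition s // ∀ p ∈ Q.parts, p.card ∈ S} = genB S s.card := by
  classical
  set f : Fin s.card ↪ Fin n := (s.orderEmbOfFin rfl).toEmbedding with hf
  have key : (Finset.univ : Finset (Fin s.card)).map f = s := map_univ_orderEmbOfFin s
  have hrange : ∀ x ∈ s, ∃ a, f a = x := by
    intro x hx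
    rw [← key] at hx
    simp only [Finset.mem_map] at hx
    obtain ⟨a, _, rfl⟩ := hx
    exact ⟨a, rfl⟩
  symm
  apply Nat.card_eq_of_bijective
    (f := fun P : {P : Finpartition (Finset.univ : Finset (Fin s.card)) //
        ∀ p ∈ P.parts, p.card ∈ S} =>
      (⟨(P.1.mapEmb f).copy key, by
        intro p hp
        simp only [Finpartition.copy, Finpartition.parts_mapEmb, Finset.mem_image] at hp
        obtain ⟨q, hq, rfl⟩ := hp
        rw [Finset.card_map]
        exact P.2 q hq⟩ : {Q : Finpartition s // ∀ p ∈ Q.parts, p.card ∈ S}))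
  constructor
  · rintro ⟨P, hP⟩ ⟨P', hP'⟩ h
    simp only [Subtype.mk.injEq] at h ⊢
    have hparts : P.parts.image (Finset.map f) = P'.parts.image (Finset.map f) := by
      have := congrArg Finpartition.parts h
      simpa only [Finpartition.copy, Finpartition.parts_mapEmb] using this
    ext1
    exact Finset.image_injective (Finset.map_injective f) hparts
  · rintro ⟨Q, hQ⟩
    have hpre : (s.preimage f f.injective.injOn) = Finset.univ := by
      apply Finset.eq_univ_of_forall
      intro a
      rw [Finset.mem_preimage]
      have := Finset.mem_map_of_mem f (Finset.mem_univ a)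
      rwa [key] at this
    have himg : ∀ p ∈ Q.parts, (p.preimage f f.injective.injOn).map f = p := by
      intro p hp
      rw [Finset.map_eq_image, Finset.image_preimage]
      apply Finset.filter_true_of_mem
      intro x hx
      obtain ⟨a, ha⟩ := hrange x (Q.le hp hx)
      exact ⟨a, ha⟩
    have hcardpre : ∀ p ∈ Q.parts, (p.preimage f f.injective.injOn).card = p.card := by
      intro p hp
      conv_rhs => rw [← himg p hp]
      rw [Finset.card_map]
    refine ⟨⟨(Q.preimageEmb f hrange).copy hpre, ?_⟩, ?_⟩
    · intro p hp
      simp only [Finpartition.copy, Finpartition.preimageEmb, Finset.mem_image] at hp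
      obtain ⟨q, hq, rfl⟩ := hp
      rw [hcardpre q hq]
      exact hQ q hq
    · simp only [Subtype.mk.injEq]
      ext1
      simp only [Finpartition.copy, Finpartition.parts_mapEmb, Finpartition.preimageEmb,
        Finset.image_image]
      calc Q.parts.image ((Finset.map f) ∘ fun p => p.preimage f f.injective.injOn)
          = Q.parts.image id := Finset.image_congr (fun p hp => himg p hp)
        _ = Q.parts := Finset.image_id
end

variable {α : Type*} [Fintype α] [DecidableEq α]

lemma sup_sdiff_parts (P : Finpartition (Finset.univ : Finset α))
    {u : Finset (Finset α)} (hu : u ⊆ P.parts) :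
    ((P.parts \ u).sup id) = (u.sup id)ᶜ := by
  have hdisj : Disjoint (u.sup id) ((P.parts \ u).sup id) := by
    rw [Finset.disjoint_sup_left]
    intro p hp
    rw [Finset.disjoint_sup_right]
    intro q hq
    rw [Finset.mem_sdiff] at hq
    exact P.disjoint (hu hp) hq.1 (fun h => hq.2 (h ▸ hp))
  have hcod : (u.sup id) ⊔ ((P.parts \ u).sup id) = Finset.univ := by
    rw [← Finset.sup_union, Finset.union_sdiff_of_subset hu, P.sup_parts]
  have hic : IsCompl (u.sup id) ((P.parts \ u).sup id) :=
    ⟨hdisj, codisjoint_iff.2 (by rw [hcod, Finset.top_eq_univ])⟩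
  exact hic.compl_eq.symm

lemma nat_card_eq_sum_fibers {β γ : Type*} [Finite β] [Fintype γ] (f : β → γ) :
    Nat.card β = ∑ c : γ, Nat.card {b // f b = c} := by
  classical
  cases nonempty_fintype β
  rw [← Nat.card_congr (Equiv.sigmaFiberEquiv f), Nat.card_eq_fintype_card,
    Fintype.card_sigma]
  exact Finset.sum_congr rfl fun c _ => (Nat.card_eq_fintype_card).symm

lemma card_filter_mem_card (a : α) (k : ℕ) (hk : 0 < k) :
    ((Finset.univ : Finset (Finset α)).filter (fun b => a ∈ b ∧ b.card = k)).card
      = (Fintype.card α - 1).choose (k - 1) := by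
  have hpc : (Finset.powersetCard (k-1) (({a}ᶜ : Finset α))).card
      = (Fintype.card α - 1).choose (k-1) := by
    rw [Finset.card_powersetCard]
    congr 1
    rw [Finset.card_compl, Finset.card_singleton]
  rw [← hpc]
  · refine Finset.card_bij' (fun b _ => b.erase a) (fun c _ => insert a c) ?_ ?_ ?_ ?_
    · intro b hb
      simp only [Finset.mem_filter, Finset.mem_univ, true_and] at hb
      rw [Finset.mem_powersetCard]
      refine ⟨?_, by rw [Finset.card_erase_of_mem hb.1, hb.2]⟩
      intro x hx
      rw [Finset.mem_erase] at hx
      simp [hx.1]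
    · intro c hc
      rw [Finset.mem_powersetCard] at hc
      simp only [Finset.mem_filter, Finset.mem_univ, true_and]
      have ha : a ∉ c := by
        intro h
        have := hc.1 h
        simp at this
      refine ⟨Finset.mem_insert_self _ _, ?_⟩
      rw [Finset.card_insert_of_notMem ha, hc.2]
      omega
    · intro b hb
      simp only [Finset.mem_filter, Finset.mem_univ, true_and] at hb
      exact Finset.insert_erase hb.1
    · intro c hc
      rw [Finset.mem_powersetCard] at hc
      have ha : a ∉ c := by
        intro h; have := hc.1 h; simp at this
      exact Finset.erase_insert ha

lemma genB_zero (S : Set ℕ) : genB S 0 = 1 := by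
  have hP : ∀ P : Finpartition (Finset.univ : Finset (Fin 0)), P.parts = ∅ := fun P =>
    Finpartition.parts_eq_empty_iff.2 (by simp)
  rw [genB, Nat.card_eq_one_iff_unique]
  constructor
  · constructor
    rintro ⟨P, _⟩ ⟨Q, _⟩
    have : P = Q := by ext1; rw [hP, hP]
    simp [this]
  · exact ⟨⟨⊥, by intro p hp; rw [hP] at hp; simp at hp⟩⟩

lemma genB_singleton_not_dvd {σ m : ℕ} (h : ¬ σ ∣ m) : genB {σ} m = 0 := by
  have : IsEmpty {P : Finpartition (Finset.univ : Finset (Fin m)) //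
      ∀ p ∈ P.parts, p.card ∈ ({σ} : Set ℕ)} := by
    constructor
    rintro ⟨P, hP⟩
    apply h
    have hsum : ∑ p ∈ P.parts, p.card = m := by
      rw [P.sum_card_parts, Finset.card_univ, Fintype.card_fin]
    rw [← hsum]
    have : ∀ p ∈ P.parts, p.card = σ := fun p hp => hP p hp
    rw [Finset.sum_congr rfl this, Finset.sum_const, smul_eq_mul]
    exact Dvd.intro_left _ rfl
  rw [genB]
  exact Nat.card_of_isEmpty

-- card_filter_mem_card
lemma genB_singleton_step {σ : ℕ} (hσ : 0 < σ) {m : ℕ} (hm : 0 < m) :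
    genB {σ} m = (m - 1).choose (σ - 1) * genB {σ} (m - σ) := by
  classical
  set T := {P : Finpartition (Finset.univ : Finset (Fin m)) //
      ∀ p ∈ P.parts, p.card ∈ ({σ} : Set ℕ)} with hT
  set a : Fin m := ⟨0, hm⟩ with ha
  have step1 : genB {σ} m = ∑ b : Finset (Fin m), Nat.card {x : T // x.1.part a = b} :=
    nat_card_eq_sum_fibers (fun x : T => x.1.part a)
  have fib : ∀ b : Finset (Fin m), Nat.card {x : T // x.1.part a = b} =
      if a ∈ b ∧ b.card = σ then genB {σ} (m - σ) else 0 := by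
    intro b
    split_ifs with hcond
    · -- bijection with partitions of bᶜ
      obtain ⟨hab, hbcard⟩ := hcond
      have hbne : b ≠ ⊥ := by
        intro h; rw [h] at hab; simp at hab
      have key : ∀ x : {x : T // x.1.part a = b}, b ∈ x.1.1.parts := by
        rintro ⟨⟨P, hP⟩, hx⟩
        simp only at hx
        show b ∈ P.parts
        rw [← hx]
        exact P.part_mem.2 (Finset.mem_univ a)
      have hsup : ∀ x : {x : T // x.1.part a = b},
          (x.1.1.parts.erase b).sup id = bᶜ := by
        intro x
        rw [Finset.erase_eq]
        rw [sup_sdiff_parts x.1.1 (Finset.singleton_subset_iff.2 (key x))]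
        rw [Finset.sup_singleton]
        rfl
      let F : {x : T // x.1.part a = b} →
          {Q : Finpartition bᶜ // ∀ p ∈ Q.parts, p.card ∈ ({σ} : Set ℕ)} := fun x =>
        ⟨x.1.1.ofSubset (Finset.erase_subset _ _) (hsup x),
          fun p hp => x.1.2 p (Finset.mem_of_mem_erase hp)⟩
      have hbij : Function.Bijective F := by
        constructor
        · rintro x y hxy
          have hparts : x.1.1.parts.erase b = y.1.1.parts.erase b := by
            have := congrArg (fun z => (Subtype.val z).parts) hxy
            simpa [F, Finpartition.ofSubset] using this
          have : x.1.1.parts = y.1.1.parts := by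
            rw [← Finset.insert_erase (key x), ← Finset.insert_erase (key y), hparts]
          ext1; ext1; ext1
          exact this
        · rintro ⟨Q, hQ⟩
          have hbQ : b ∉ Q.parts := by
            intro h
            have h2 : a ∈ bᶜ := (Q.le h) hab
            rw [Finset.mem_compl] at h2
            exact h2 hab
          have hdisj : Disjoint (bᶜ : Finset (Fin m)) b := disjoint_compl_left
          have hsup2 : (bᶜ : Finset (Fin m)) ⊔ b = Finset.univ := by
            simp [Finset.sup_eq_union]
          let P : Finpartition (Finset.univ : Finset (Fin m)) := Q.extend hbne hdisj hsup2
          have hPparts : P.parts = insert b Q.parts := rfl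
          have hPsizes : ∀ p ∈ P.parts, p.card ∈ ({σ} : Set ℕ) := by
            intro p hp
            rw [hPparts, Finset.mem_insert] at hp
            rcases hp with rfl | hp
            · exact hbcard
            · exact hQ p hp
          have hpart : P.part a = b := by
            apply Finpartition.part_eq_of_mem
            · rw [hPparts]; exact Finset.mem_insert_self _ _
            · exact hab
          refine ⟨⟨⟨P, hPsizes⟩, hpart⟩, ?_⟩
          simp only [F]
          ext1
          ext1
          rw [Finpartition.ofSubset_parts]
          rw [hPparts, Finset.erase_insert hbQ]
      rw [Nat.card_eq_of_bijective F hbij, card_parts_transport,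
        Finset.card_compl, Fintype.card_fin, hbcard]
    · -- empty fiber
      have : IsEmpty {x : T // x.1.part a = b} := by
        constructor
        rintro ⟨⟨P, hP⟩, hx⟩
        apply hcond
        simp only at hx
        constructor
        · show a ∈ b
          rw [← hx]; exact P.mem_part (Finset.mem_univ a)
        · show b.card = σ
          rw [← hx]
          exact hP _ (P.part_mem.2 (Finset.mem_univ a))
      exact Nat.card_of_isEmpty
  rw [step1, Finset.sum_congr rfl (fun b _ => fib b), Finset.sum_ite, Finset.sum_const,
    Finset.sum_const_zero, add_zero, smul_eq_mul]
  congr 1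
  rw [card_filter_mem_card a σ hσ, Fintype.card_fin]

lemma genB_union_split (S : Set ℕ) (σ : ℕ) (hσ : σ ∉ S) (n : ℕ) :
    genB (S ∪ {σ}) n = ∑ A : Finset (Fin n), genB {σ} A.card * genB S (n - A.card) := by
  set T := {P : Finpartition (Finset.univ : Finset (Fin n)) //
      ∀ p ∈ P.parts, p.card ∈ (S ∪ {σ} : Set ℕ)} with hT
  set φ : T → Finset (Fin n) :=
    fun x => (x.1.parts.filter (fun p => p.card = σ)).sup id with hφ
  have step1 : genB (S ∪ {σ}) n =
      ∑ A : Finset (Fin n), Nat.card {x : T // φ x = A} :=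
    nat_card_eq_sum_fibers φ
  rw [step1]
  apply Finset.sum_congr rfl
  intro A _
  -- bijection between fiber and product
  let F : {x : T // φ x = A} →
      ({Q : Finpartition A // ∀ p ∈ Q.parts, p.card ∈ ({σ} : Set ℕ)} ×
        {R : Finpartition Aᶜ // ∀ p ∈ R.parts, p.card ∈ S}) := by
    rintro ⟨⟨P, hP⟩, hx⟩
    simp only [hφ] at hx
    refine ⟨⟨P.ofSubset (Finset.filter_subset (fun p => p.card = σ) P.parts) hx, ?_⟩,
      ⟨P.ofSubset (Finset.filter_subset (fun p => ¬ p.card = σ) P.parts) ?_, ?_⟩⟩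
    · intro p hp
      rw [Finpartition.ofSubset_parts, Finset.mem_filter] at hp
      exact hp.2
    · show (P.parts.filter (fun p => ¬ p.card = σ)).sup id = Aᶜ
      rw [Finset.filter_not, sup_sdiff_parts P (Finset.filter_subset _ _), hx]
    · intro p hp
      rw [Finpartition.ofSubset_parts, Finset.mem_filter] at hp
      rcases hP p hp.1 with h | h
      · exact h
      · exact absurd h hp.2
  have hbij : Function.Bijective F := by
    constructor
    · rintro ⟨⟨P, hP⟩, hx⟩ ⟨⟨P', hP'⟩, hx'⟩ h
      simp only [hφ] at hx hx'
      simp only [F, Prod.mk.injEq, Subtype.mk.injEq] at h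
      obtain ⟨h1, h2⟩ := h
      have e1 : P.parts.filter (fun p => p.card = σ)
          = P'.parts.filter (fun p => p.card = σ) := congrArg (fun z => Finpartition.parts (Subtype.val z)) h1
      have e2 : P.parts.filter (fun p => ¬ p.card = σ)
          = P'.parts.filter (fun p => ¬ p.card = σ) := congrArg Finpartition.parts h2
      have : P.parts = P'.parts := by
        rw [← Finset.filter_union_filter_not_eq (fun p => p.card = σ) P.parts,
          ← Finset.filter_union_filter_not_eq (fun p => p.card = σ) P'.parts, e1, e2]
      ext1; ext1; ext1
      exact this
    · rintro ⟨⟨Q, hQ⟩, ⟨R, hR⟩⟩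
      have hdisjQR : ∀ p ∈ Q.parts, ∀ q ∈ R.parts, Disjoint p q := by
        intro p hp q hq
        exact Disjoint.mono (Q.le hp) (R.le hq) disjoint_compl_right
      let P : Finpartition (Finset.univ : Finset (Fin n)) :=
        { parts := Q.parts ∪ R.parts
          supIndep := by
            rw [Finset.supIndep_iff_pairwiseDisjoint]
            intro p hp q hq hne
            simp only [Finset.coe_union, Set.mem_union, Finset.mem_coe] at hp hq
            rcases hp with hp | hp <;> rcases hq with hq | hq
            · exact Q.disjoint hp hq hne
            · exact hdisjQR p hp q hq
            · exact (hdisjQR q hq p hp).symm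
            · exact R.disjoint hp hq hne
          sup_parts := by
            rw [Finset.sup_union, Q.sup_parts, R.sup_parts]
            simp [Finset.sup_eq_union]
          bot_notMem := by
            rw [Finset.mem_union]
            rintro (h | h)
            · exact Q.bot_notMem h
            · exact R.bot_notMem h }
      have hQσ : ∀ p ∈ Q.parts, p.card = σ := fun p hp => hQ p hp
      have hRσ : ∀ p ∈ R.parts, ¬ p.card = σ := by
        intro p hp h
        exact hσ (h ▸ hR p hp)
      have hfilter : P.parts.filter (fun p => p.card = σ) = Q.parts := by
        show (Q.parts ∪ R.parts).filter (fun p => p.card = σ) = Q.parts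
        rw [Finset.filter_union, Finset.filter_true_of_mem hQσ,
          Finset.filter_false_of_mem hRσ, Finset.union_empty]
      have hfilter' : P.parts.filter (fun p => ¬ p.card = σ) = R.parts := by
        show (Q.parts ∪ R.parts).filter (fun p => ¬ p.card = σ) = R.parts
        rw [Finset.filter_union, Finset.filter_false_of_mem (fun p hp h => h (hQσ p hp)),
          Finset.filter_true_of_mem hRσ, Finset.empty_union]
      have hPsizes : ∀ p ∈ P.parts, p.card ∈ (S ∪ {σ} : Set ℕ) := by
        intro p hp
        rcases Finset.mem_union.1 hp with h | h
        · exact Or.inr (hQ p h)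
        · exact Or.inl (hR p h)
      have hfib : φ ⟨P, hPsizes⟩ = A := by
        show (P.parts.filter (fun p => p.card = σ)).sup id = A
        rw [hfilter, Q.sup_parts]
      refine ⟨⟨⟨P, hPsizes⟩, hfib⟩, ?_⟩
      simp only [F, Prod.mk.injEq, Subtype.mk.injEq]
      constructor
      · ext1; ext1
        exact hfilter
      · ext1
        rw [Finpartition.ofSubset_parts, hfilter']
  rw [Nat.card_eq_of_bijective F hbij, Nat.card_prod,
    card_parts_transport, card_parts_transport, Finset.card_compl, Fintype.card_fin]

lemma genB_singleton_mul {σ : ℕ} (hσ : 0 < σ) (i : ℕ) :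
    genB {σ} (σ * i) = Nat.uniformBell i σ := by
  induction i with
  | zero => rw [Nat.mul_zero, genB_zero, Nat.uniformBell_zero_left]
  | succ i ih =>
    have hm : 0 < σ * (i + 1) := by positivity
    rw [genB_singleton_step hσ hm, Nat.uniformBell_succ_left]
    have h1 : σ * (i + 1) - σ = σ * i := by rw [Nat.mul_succ]; omega
    have h2 : σ * (i + 1) - 1 = i * σ + σ - 1 := by rw [Nat.mul_succ, Nat.mul_comm i σ]
    rw [h1, ih, h2]

lemma sum_finsets_card {α : Type*} [Fintype α] [DecidableEq α] (g : ℕ → ℕ) :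
    ∑ A : Finset α, g A.card
      = ∑ k ∈ Finset.range (Fintype.card α + 1), (Fintype.card α).choose k * g k := by
  rw [← Finset.powerset_univ, Finset.sum_powerset]
  simp only [Finset.card_univ]
  refine Finset.sum_congr rfl fun k _ => ?_
  rw [Finset.sum_congr rfl (fun t ht => by
      rw [(Finset.mem_powersetCard.1 ht).2]), Finset.sum_const,
    Finset.card_powersetCard, Finset.card_univ, smul_eq_mul]

theorem statement14 (S : Set ℕ) (hS : 0 ∉ S) (σ : ℕ) (hσpos : 0 < σ) (hσ : σ ∉ S)
    (n : ℕ) :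
    (genB (S ∪ {σ}) n : ℚ) =
      ∑ i ∈ Finset.range (n / σ + 1),
        (n.factorial : ℚ) /
            ((i.factorial : ℚ) * ((n - σ * i).factorial : ℚ) * (σ.factorial : ℚ) ^ i) *
          (genB S (n - σ * i) : ℚ) := by
  have hσ0 : σ ≠ 0 := hσpos.ne'
  have key : genB (S ∪ {σ}) n
      = ∑ i ∈ Finset.range (n / σ + 1),
          n.choose (σ * i) * Nat.uniformBell i σ * genB S (n - σ * i) := by
    rw [genB_union_split S σ hσ n,
      sum_finsets_card (fun k => genB {σ} k * genB S (n - k))]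
    simp only [Fintype.card_fin]
    have hfe : (Finset.range (n + 1)).filter (fun k => σ ∣ k)
        = (Finset.range (n / σ + 1)).image (fun i => σ * i) := by
      ext k
      simp only [Finset.mem_filter, Finset.mem_range, Finset.mem_image]
      constructor
      · rintro ⟨hk, j, rfl⟩
        exact ⟨j, by
          have : j ≤ (σ * j) / σ := by rw [Nat.mul_div_cancel_left _ hσpos]
          have h2 : (σ * j) / σ ≤ n / σ := Nat.div_le_div_right (by omega)
          omega, rfl⟩
      · rintro ⟨j, hj, rfl⟩
        refine ⟨?_, Dvd.intro j rfl⟩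
        have h1 : j ≤ n / σ := by omega
        have h2 := (Nat.le_div_iff_mul_le hσpos).1 h1
        have hc : σ * j = j * σ := Nat.mul_comm σ j
        omega
    rw [← Finset.sum_filter_of_ne (p := fun k => σ ∣ k) (by
      intro k _ hne
      by_contra hndvd
      rw [genB_singleton_not_dvd hndvd] at hne
      simp at hne), hfe,
      Finset.sum_image (by
        intro a _ b _ h
        exact Nat.eq_of_mul_eq_mul_left hσpos h)]
    refine Finset.sum_congr rfl fun i _ => ?_
    rw [genB_singleton_mul hσpos, mul_assoc]
  rw [key]
  push_cast
  refine Finset.sum_congr rfl fun i hi => ?_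
  have hle : σ * i ≤ n := by
    rw [Finset.mem_range] at hi
    have h1 : i ≤ n / σ := by omega
    have h2 := (Nat.le_div_iff_mul_le hσpos).1 h1
    have hc : σ * i = i * σ := Nat.mul_comm σ i
    omega
  have hub : (Nat.uniformBell i σ : ℚ)
      = ((i * σ).factorial : ℚ) / ((σ.factorial : ℚ) ^ i * (i.factorial : ℚ)) := by
    have h := Nat.uniformBell_mul_eq i hσ0
    have hcast : (Nat.uniformBell i σ : ℚ) * (σ.factorial : ℚ) ^ i * (i.factorial : ℚ)
        = ((i * σ).factorial : ℚ) := by exact_mod_cast h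
    rw [eq_div_iff (mul_ne_zero
      (pow_ne_zero _ (Nat.cast_ne_zero.2 (Nat.factorial_ne_zero _)))
      (Nat.cast_ne_zero.2 (Nat.factorial_ne_zero _))), ← mul_assoc]
    exact hcast
  rw [Nat.cast_choose ℚ hle, hub, mul_comm i σ]
  have f1 : ((σ * i).factorial : ℚ) ≠ 0 := Nat.cast_ne_zero.2 (Nat.factorial_ne_zero _)
  have f2 : ((n - σ * i).factorial : ℚ) ≠ 0 := Nat.cast_ne_zero.2 (Nat.factorial_ne_zero _)
  have f3 : (i.factorial : ℚ) ≠ 0 := Nat.cast_ne_zero.2 (Nat.factorial_ne_zero _)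
  have f4 : ((σ.factorial : ℚ)) ^ i ≠ 0 :=
    pow_ne_zero _ (Nat.cast_ne_zero.2 (Nat.factorial_ne_zero _))
  field_simp
end

section
/- Let p be a prime, let ι be a finite index type, and let S : ι → Set ℕ be a family of pairwise disjoint sets of positive integers. Then B_{p, ⋃_i S_i} ≡ ∑_i B_{p, S_i} (mod p). -/
open Finset MulAction

section Shift

variable {n : ℕ} [NeZero n]

/-- The order isomorphism on `Finset (Fin n)` induced by translation by `c`. -/
def trIso (c : Fin n) : Finset (Fin n) ≃o Finset (Fin n) :=
  (Equiv.addLeft c).finsetCongr.toOrderIso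
    (by intro s t h; simpa [Equiv.finsetCongr_apply, Finset.map_subset_map] using h)
    (by intro s t h; simpa [Equiv.finsetCongr_apply, Finset.map_subset_map] using h)

lemma trIso_apply (c : Fin n) (s : Finset (Fin n)) :
    trIso c s = s.map (Equiv.addLeft c).toEmbedding := rfl

/-- Shift a finpartition of `Fin n` by translation by `c`. -/
def pshift (c : Fin n) (P : Finpartition (Finset.univ : Finset (Fin n))) :
    Finpartition (Finset.univ : Finset (Fin n)) :=
  (P.map (trIso c)).copy (by
    show trIso c Finset.univ = Finset.univ
    rw [trIso_apply, Finset.map_univ_equiv])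

lemma mem_pshift_iff {c : Fin n} {P : Finpartition (Finset.univ : Finset (Fin n))}
    {t : Finset (Fin n)} :
    t ∈ (pshift c P).parts ↔ ∃ u ∈ P.parts, u.map (Equiv.addLeft c).toEmbedding = t := by
  simp only [pshift, Finpartition.copy_parts, Finpartition.parts_map, Finset.mem_map]
  rfl

lemma map_mem_pshift {c : Fin n} {P : Finpartition (Finset.univ : Finset (Fin n))}
    {u : Finset (Fin n)} (hu : u ∈ P.parts) :
    u.map (Equiv.addLeft c).toEmbedding ∈ (pshift c P).parts :=
  mem_pshift_iff.2 ⟨u, hu, rfl⟩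

lemma pshift_zero (P : Finpartition (Finset.univ : Finset (Fin n))) : pshift 0 P = P := by
  apply Finpartition.ext
  ext t
  rw [mem_pshift_iff]
  constructor
  · rintro ⟨u, hu, rfl⟩
    convert hu using 1
    ext x
    simp
    exact Iff.rfl
  · intro ht
    refine ⟨t, ht, ?_⟩
    ext x
    simp
    exact Iff.rfl

lemma map_addLeft_map_addLeft (u : Finset (Fin n)) (a b : Fin n) :
    (u.map (Equiv.addLeft b).toEmbedding).map (Equiv.addLeft a).toEmbedding
      = u.map (Equiv.addLeft (a + b)).toEmbedding := by
  ext x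
  simp only [Finset.mem_map, Equiv.coe_toEmbedding, Equiv.coe_addLeft]
  constructor
  · rintro ⟨y, ⟨z, hz, rfl⟩, rfl⟩
    exact ⟨z, hz, by rw [add_assoc]⟩
  · rintro ⟨z, hz, rfl⟩
    exact ⟨b + z, ⟨z, hz, rfl⟩, by rw [add_assoc]⟩

lemma pshift_add (a b : Fin n) (P : Finpartition (Finset.univ : Finset (Fin n))) :
    pshift (a + b) P = pshift a (pshift b P) := by
  apply Finpartition.ext
  ext t
  rw [mem_pshift_iff, mem_pshift_iff]
  constructor
  · rintro ⟨u, hu, rfl⟩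
    exact ⟨u.map (Equiv.addLeft b).toEmbedding, map_mem_pshift hu,
      map_addLeft_map_addLeft u a b⟩
  · rintro ⟨v, hv, rfl⟩
    obtain ⟨u, hu, rfl⟩ := mem_pshift_iff.1 hv
    exact ⟨u, hu, (map_addLeft_map_addLeft u a b).symm⟩

lemma card_of_mem_pshift {c : Fin n} {P : Finpartition (Finset.univ : Finset (Fin n))}
    {t : Finset (Fin n)} (ht : t ∈ (pshift c P).parts) :
    ∃ u ∈ P.parts, u.card = t.card := by
  obtain ⟨u, hu, rfl⟩ := mem_pshift_iff.1 ht
  exact ⟨u, hu, (Finset.card_map _).symm⟩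


lemma univ_ne_bot : (Finset.univ : Finset (Fin n)) ≠ ⊥ := by
  have : (0 : Fin n) ∈ (Finset.univ : Finset (Fin n)) := Finset.mem_univ _
  intro h
  rw [h] at this
  simpa using this

/-- The one-block partition of `Fin n`. -/
def topP : Finpartition (Finset.univ : Finset (Fin n)) :=
  Finpartition.indiscrete univ_ne_bot

lemma topP_parts : (topP : Finpartition (Finset.univ : Finset (Fin n))).parts
    = {Finset.univ} := Finpartition.indiscrete_parts _

lemma pshift_bot (c : Fin n) : pshift c (⊥ : Finpartition (Finset.univ : Finset (Fin n))) = ⊥ := by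
  apply Finpartition.ext
  ext t
  rw [mem_pshift_iff]
  simp only [Finpartition.parts_bot, Finset.mem_map, Function.Embedding.coeFn_mk,
    Finset.mem_univ, true_and]
  constructor
  · rintro ⟨u, ⟨a, -, rfl⟩, rfl⟩
    exact ⟨c + a, by simp⟩
  · rintro ⟨a, rfl⟩
    exact ⟨{-c + a}, ⟨-c + a, rfl⟩, by simp⟩

lemma pshift_topP (c : Fin n) : pshift c (topP : Finpartition (Finset.univ : Finset (Fin n)))
    = topP := by
  apply Finpartition.ext
  ext t
  rw [mem_pshift_iff]
  simp only [topP_parts, Finset.mem_singleton]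
  constructor
  · rintro ⟨u, hu, rfl⟩
    subst hu
    exact Finset.map_univ_equiv _
  · rintro rfl
    exact ⟨Finset.univ, rfl, Finset.map_univ_equiv _⟩

lemma bot_ne_topP (hn : 1 < n) :
    (⊥ : Finpartition (Finset.univ : Finset (Fin n))) ≠ topP := by
  intro h
  have huniv : (Finset.univ : Finset (Fin n)) ∈
      (⊥ : Finpartition (Finset.univ : Finset (Fin n))).parts := by
    rw [h, topP_parts]; exact Finset.mem_singleton_self _
  rw [Finpartition.parts_bot, Finset.mem_map] at huniv
  obtain ⟨a, -, ha⟩ := huniv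
  have : (Finset.univ : Finset (Fin n)).card = 1 := by
    rw [← ha]; simp
  rw [Finset.card_univ, Fintype.card_fin] at this
  omega

lemma fixed_classify (hn : n.Prime) {P : Finpartition (Finset.univ : Finset (Fin n))}
    (hfix : ∀ c : Fin n, pshift c P = P) : P = ⊥ ∨ P = topP := by
  have h0 : (0 : Fin n) ∈ (Finset.univ : Finset (Fin n)) := Finset.mem_univ _
  set B := P.part 0 with hBdef
  have hB0 : (0 : Fin n) ∈ B := P.mem_part h0
  have hBmem : B ∈ P.parts := P.part_mem.2 h0
  have hshift : ∀ c : Fin n, B.map (Equiv.addLeft c).toEmbedding ∈ P.parts := by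
    intro c
    have := map_mem_pshift (c := c) hBmem
    rwa [hfix c] at this
  by_cases hsing : B = {0}
  · left
    apply Finpartition.ext
    rw [Finpartition.parts_bot]
    ext t
    rw [Finset.mem_map]
    simp only [Function.Embedding.coeFn_mk, Finset.mem_univ, true_and]
    have hsingmem : ∀ x : Fin n, ({x} : Finset (Fin n)) ∈ P.parts := by
      intro x
      have := hshift x
      rw [hsing] at this
      simpa using this
    constructor
    · intro ht
      obtain ⟨x, hx⟩ := P.nonempty_of_mem_parts ht
      exact ⟨x, P.eq_of_mem_parts (hsingmem x) ht (Finset.mem_singleton_self x) hx⟩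
    · rintro ⟨x, rfl⟩
      exact hsingmem x
  · right
    obtain ⟨a, haB, ha0⟩ : ∃ a ∈ B, a ≠ 0 := by
      by_contra h
      push_neg at h
      exact hsing (Finset.eq_singleton_iff_unique_mem.2 ⟨hB0, h⟩)
    have hBa : B.map (Equiv.addLeft a).toEmbedding = B := by
      apply P.eq_of_mem_parts (hshift a) hBmem _ haB
      simp only [Finset.mem_map, Equiv.coe_toEmbedding, Equiv.coe_addLeft]
      exact ⟨0, hB0, add_zero a⟩
    have horder : addOrderOf a = n := by
      have hdvd : addOrderOf a ∣ n := by
        simpa using addOrderOf_dvd_card (x := a)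
      rcases hn.eq_one_or_self_of_dvd _ hdvd with h1 | h
      · exact absurd (AddMonoid.addOrderOf_eq_one_iff.1 h1) ha0
      · exact h
    have hz : AddSubgroup.zmultiples a = ⊤ := by
      apply AddSubgroup.eq_top_of_card_eq
      rw [Nat.card_zmultiples, horder, Nat.card_eq_fintype_card, Fintype.card_fin]
    have hint : ∀ k : ℤ, k • a ∈ B := by
      intro k
      induction k using Int.induction_on with
      | zero => simpa using hB0
      | succ i hi =>
          have hmem : a + (i : ℤ) • a ∈ B := by
            rw [← hBa]
            rw [Finset.mem_map]
            exact ⟨(i : ℤ) • a, hi, rfl⟩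
          have : ((i : ℤ) + 1) • a = a + (i : ℤ) • a := by
            rw [add_smul, one_smul, add_comm]
          rwa [this]
      | pred i hi =>
          have hmem : (-(i : ℤ)) • a ∈ B := hi
          rw [← hBa, Finset.mem_map] at hmem
          obtain ⟨y, hy, hya⟩ := hmem
          have hyval : y = (-(i : ℤ) - 1) • a := by
            have heq : (Equiv.addLeft a).toEmbedding y = a + y := rfl
            rw [heq] at hya
            have h2 : -(i : ℤ) • a - a = y := sub_eq_of_eq_add' hya.symm
            rw [← h2, sub_smul, one_smul]
          rwa [hyval] at hy
    have hBuniv : B = Finset.univ := by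
      apply Finset.eq_univ_of_forall
      intro x
      have hx : x ∈ AddSubgroup.zmultiples a := by rw [hz]; trivial
      obtain ⟨k, hk⟩ := AddSubgroup.mem_zmultiples_iff.1 hx
      rw [← hk]
      exact hint k
    apply Finpartition.ext
    rw [topP_parts]
    ext t
    rw [Finset.mem_singleton]
    constructor
    · intro ht
      obtain ⟨x, hx⟩ := P.nonempty_of_mem_parts ht
      have hxB : x ∈ B := by rw [hBuniv]; exact Finset.mem_univ _
      exact (P.eq_of_mem_parts ht hBmem hx hxB).trans hBuniv
    · rintro rfl
      rw [hBuniv] at hBmem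
      exact hBmem

end Shift

open scoped Classical in
lemma genB_prime_modEq (p : ℕ) (hp : p.Prime) (S : Set ℕ) :
    genB S p ≡ ((if 1 ∈ S then 1 else 0) + (if p ∈ S then 1 else 0)) [MOD p] := by
  classical
  haveI : NeZero p := ⟨hp.ne_zero⟩
  haveI : Fact p.Prime := ⟨hp⟩
  set α := {P : Finpartition (Finset.univ : Finset (Fin p)) // ∀ q ∈ P.parts, q.card ∈ S}
    with hα
  letI : MulAction (Multiplicative (Fin p)) α :=
    { smul := fun g x => ⟨pshift g.toAdd x.1, fun q hq => by
        obtain ⟨u, hu, hc⟩ := card_of_mem_pshift hq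
        rw [← hc]
        exact x.2 u hu⟩
      one_smul := fun x => Subtype.ext (pshift_zero x.1)
      mul_smul := fun g h x => Subtype.ext (pshift_add g.toAdd h.toAdd x.1) }
  have hsmul_val : ∀ (g : Multiplicative (Fin p)) (x : α), (g • x).1 = pshift g.toAdd x.1 :=
    fun _ _ => rfl
  have hmod := (IsPGroup.of_card (G := Multiplicative (Fin p)) (p := p) (n := 1)
    (by simp [Nat.card_eq_fintype_card])).card_modEq_card_fixedPoints α
  have hfixiff : ∀ x : α, x ∈ MulAction.fixedPoints (Multiplicative (Fin p)) α ↔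
      ∀ c : Fin p, pshift c x.1 = x.1 := by
    intro x
    rw [MulAction.mem_fixedPoints]
    constructor
    · intro h c
      have := h (Multiplicative.ofAdd c)
      have := congrArg Subtype.val this
      rwa [hsmul_val] at this
    · intro h g
      exact Subtype.ext ((hsmul_val g x).trans (h g.toAdd))
  have hchar : MulAction.fixedPoints (Multiplicative (Fin p)) α
      = {x : α | x.1 = ⊥ ∨ x.1 = topP} := by
    ext x
    rw [Set.mem_setOf_eq, hfixiff x]
    constructor
    · intro h
      exact fixed_classify hp h
    · rintro (h | h) c
      · rw [h, pshift_bot]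
      · rw [h, pshift_topP]
  have hbot_cond : (∀ q ∈ (⊥ : Finpartition (Finset.univ : Finset (Fin p))).parts,
      q.card ∈ S) ↔ 1 ∈ S := by
    constructor
    · intro h
      have h0 : ({(0 : Fin p)} : Finset (Fin p)) ∈
          (⊥ : Finpartition (Finset.univ : Finset (Fin p))).parts := by
        rw [Finpartition.parts_bot, Finset.mem_map]
        exact ⟨0, Finset.mem_univ _, rfl⟩
      have := h _ h0
      simpa using this
    · intro h q hq
      rw [Finpartition.parts_bot, Finset.mem_map] at hq
      obtain ⟨a, -, rfl⟩ := hq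
      simpa using h
  have htop_cond : (∀ q ∈ (topP : Finpartition (Finset.univ : Finset (Fin p))).parts,
      q.card ∈ S) ↔ p ∈ S := by
    rw [topP_parts]
    constructor
    · intro h
      have := h _ (Finset.mem_singleton_self _)
      simpa using this
    · intro h q hq
      rw [Finset.mem_singleton] at hq
      subst hq
      simpa using h
  have hne : (⊥ : Finpartition (Finset.univ : Finset (Fin p))) ≠ topP :=
    bot_ne_topP hp.one_lt
  have hcount : Nat.card (MulAction.fixedPoints (Multiplicative (Fin p)) α)
      = (if 1 ∈ S then 1 else 0) + (if p ∈ S then 1 else 0) := by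
    rw [hchar, Nat.card_coe_set_eq]
    by_cases h1 : 1 ∈ S <;> by_cases h2 : p ∈ S
    · rw [if_pos h1, if_pos h2]
      have hset : {x : α | x.1 = ⊥ ∨ x.1 = topP}
          = {(⟨⊥, hbot_cond.2 h1⟩ : α), ⟨topP, htop_cond.2 h2⟩} := by
        ext x
        simp only [Set.mem_setOf_eq, Set.mem_insert_iff, Set.mem_singleton_iff]
        constructor
        · rintro (h | h)
          · exact Or.inl (Subtype.ext h)
          · exact Or.inr (Subtype.ext h)
        · rintro (rfl | rfl)
          · exact Or.inl rfl
          · exact Or.inr rfl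
      rw [hset, Set.ncard_pair (fun h => hne (congrArg Subtype.val h))]
    · rw [if_pos h1, if_neg h2]
      have hset : {x : α | x.1 = ⊥ ∨ x.1 = topP} = {(⟨⊥, hbot_cond.2 h1⟩ : α)} := by
        ext x
        simp only [Set.mem_setOf_eq, Set.mem_singleton_iff]
        constructor
        · rintro (h | h)
          · exact Subtype.ext h
          · exact absurd (htop_cond.1 (h ▸ x.2)) h2
        · rintro rfl
          exact Or.inl rfl
      rw [hset, Set.ncard_singleton]
    · rw [if_neg h1, if_pos h2]
      have hset : {x : α | x.1 = ⊥ ∨ x.1 = topP} = {(⟨topP, htop_cond.2 h2⟩ : α)} := by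
        ext x
        simp only [Set.mem_setOf_eq, Set.mem_singleton_iff]
        constructor
        · rintro (h | h)
          · exact absurd (hbot_cond.1 (h ▸ x.2)) h1
          · exact Subtype.ext h
        · rintro rfl
          exact Or.inr rfl
      rw [hset, Set.ncard_singleton]
    · rw [if_neg h1, if_neg h2]
      have hset : {x : α | x.1 = ⊥ ∨ x.1 = topP} = (∅ : Set α) := by
        ext x
        simp only [Set.mem_setOf_eq, Set.mem_empty_iff_false, iff_false]
        rintro (h | h)
        · exact h1 (hbot_cond.1 (h ▸ x.2))
        · exact h2 (htop_cond.1 (h ▸ x.2))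
      rw [hset, Set.ncard_empty]
  have hgen : genB S p = Nat.card α := rfl
  rw [hgen, ← hcount]
  exact hmod



theorem statement19 {ι : Type*} [Fintype ι] (p : ℕ) (hp : p.Prime) (S : ι → Set ℕ)
    (hS : ∀ i, 0 ∉ S i) (hdisj : Pairwise fun i j => Disjoint (S i) (S j)) :
    genB (⋃ i, S i) p ≡ ∑ i, genB (S i) p [MOD p] := by
  classical
  have hsum : (∑ i, genB (S i) p) ≡
      ∑ i, ((if 1 ∈ S i then 1 else 0) + (if p ∈ S i then 1 else 0)) [MOD p] := by
    induction (Finset.univ : Finset ι) using Finset.induction_on with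
    | empty => simp [Nat.ModEq.refl]
    | @insert _ _ hni ih =>
        rw [Finset.sum_insert hni, Finset.sum_insert hni]
        exact (genB_prime_modEq p hp _).add ih
  have hpt : ∀ m : ℕ, (if m ∈ ⋃ i, S i then (1 : ℕ) else 0)
      = ∑ i, if m ∈ S i then 1 else 0 := by
    intro m
    by_cases hm : m ∈ ⋃ i, S i
    · rw [if_pos hm]
      obtain ⟨i0, hi0⟩ := Set.mem_iUnion.1 hm
      rw [Finset.sum_eq_single i0]
      · rw [if_pos hi0]
      · intro j _ hj
        rw [if_neg]
        intro hmj
        exact Set.disjoint_left.1 (hdisj hj) hmj hi0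
      · intro h
        exact absurd (Finset.mem_univ i0) h
    · rw [if_neg hm]
      symm
      apply Finset.sum_eq_zero
      intro i _
      rw [if_neg]
      intro hmi
      exact hm (Set.mem_iUnion.2 ⟨i, hmi⟩)
  have heq : ((if 1 ∈ ⋃ i, S i then (1 : ℕ) else 0) + (if p ∈ ⋃ i, S i then 1 else 0))
      = ∑ i, ((if 1 ∈ S i then 1 else 0) + (if p ∈ S i then 1 else 0)) := by
    rw [hpt 1, hpt p, ← Finset.sum_add_distrib]
  calc genB (⋃ i, S i) p
      ≡ (if 1 ∈ ⋃ i, S i then 1 else 0) + (if p ∈ ⋃ i, S i then 1 else 0) [MOD p] :=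
        genB_prime_modEq p hp _
    _ = ∑ i, ((if 1 ∈ S i then 1 else 0) + (if p ∈ S i then 1 else 0)) := heq
    _ ≡ ∑ i, genB (S i) p [MOD p] := hsum.symm
end
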